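/- Let f = ‖·‖ be the Euclidean norm on ℝ^d, α, β > 0, and f_α = f − env_α f. Then for nonzero x ∈ ℝ^d, prox_{βf_α}(x) = prox_{β|·|_α}(‖x‖)·(x/‖x‖), where |·|_α(t) = |t| − env_α|·|(t). -/

import Mathlib

/-- Moreau envelope of `f` with parameter `α`. -/
noncomputable def moreauEnv {E : Type*} [NormedAddCommGroup E]
    (α : ℝ) (f : E → ℝ) (x : E) : ℝ :=
  ⨅ w : E, f w + (1 / (2 * α)) * ‖w - x‖ ^ 2

/-- The set of minimizers defining the (possibly set-valued) proximity operator
of `f` with index `β` at `x`. -/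
def proxSet {E : Type*} [NormedAddCommGroup E]
    (β : ℝ) (f : E → ℝ) (x : E) : Set E :=
  {w | ∀ u : E, f w + (1 / (2 * β)) * ‖w - x‖ ^ 2 ≤ f u + (1 / (2 * β)) * ‖u - x‖ ^ 2}

lemma bdd_aux {E : Type*} [NormedAddCommGroup E] (γ : ℝ) (hγ : 0 < γ)
    (f : E → ℝ) (hf : ∀ v, 0 ≤ f v) (x : E) :
    BddBelow (Set.range fun w => f w + (1 / (2 * γ)) * ‖w - x‖ ^ 2) := by
  refine ⟨0, ?_⟩
  rintro _ ⟨w, rfl⟩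
  have h1 := hf w
  have h2 : 0 ≤ (1 / (2 * γ)) * ‖w - x‖ ^ 2 := by positivity
  linarith

lemma env_le {E : Type*} [NormedAddCommGroup E] (γ : ℝ) (hγ : 0 < γ)
    (f : E → ℝ) (hf : ∀ v, 0 ≤ f v) (x v : E) :
    moreauEnv γ f x ≤ f v + (1 / (2 * γ)) * ‖v - x‖ ^ 2 :=
  ciInf_le (bdd_aux γ hγ f hf x) v

lemma env_abs_neg (α : ℝ) (hα : 0 < α) (t : ℝ) :
    moreauEnv α (fun s : ℝ => |s|) (-t) ≤ moreauEnv α (fun s : ℝ => |s|) t := by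
  apply le_ciInf
  intro s
  have h := env_le α hα (fun s : ℝ => |s|) (fun s => abs_nonneg s) (-t) (-s)
  have h2 : ((-s : ℝ)) - (-t) = -(s - t) := by ring
  rw [h2, norm_neg, abs_neg] at h
  exact h

lemma env_abs_even (α : ℝ) (hα : 0 < α) (t : ℝ) :
    moreauEnv α (fun s : ℝ => |s|) |t| = moreauEnv α (fun s : ℝ => |s|) t := by
  rcases abs_cases t with ⟨h, _⟩ | ⟨h, _⟩
  · rw [h]
  · rw [h]
    exact le_antisymm (env_abs_neg α hα t) (by simpa using env_abs_neg α hα (-t))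

lemma env_norm_eq {d : ℕ} (α : ℝ) (hα : 0 < α) (e : EuclideanSpace ℝ (Fin d))
    (he : ‖e‖ = 1) (w : EuclideanSpace ℝ (Fin d)) :
    moreauEnv α (fun v : EuclideanSpace ℝ (Fin d) => ‖v‖) w
      = moreauEnv α (fun s : ℝ => |s|) ‖w‖ := by
  have hcn : (0:ℝ) ≤ 1 / (2 * α) := by positivity
  apply le_antisymm
  · apply le_ciInf
    intro s
    -- choose u a unit vector aligned with w
    obtain ⟨u, hu1, hw⟩ : ∃ u : EuclideanSpace ℝ (Fin d), ‖u‖ = 1 ∧ w = ‖w‖ • u := by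
      by_cases h : w = 0
      · exact ⟨e, he, by simp [h]⟩
      · refine ⟨‖w‖⁻¹ • w, ?_, ?_⟩
        · rw [norm_smul, norm_inv, norm_norm, inv_mul_cancel₀ (norm_ne_zero_iff.2 h)]
        · rw [smul_smul, mul_inv_cancel₀ (norm_ne_zero_iff.2 h), one_smul]
    have key := env_le α hα (fun v : EuclideanSpace ℝ (Fin d) => ‖v‖)
      (fun v => norm_nonneg v) w (|s| • u)
    have h1 : ‖(|s| : ℝ) • u‖ = |s| := by
      rw [norm_smul, Real.norm_eq_abs, abs_abs, hu1, mul_one]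
    have h2 : ‖(|s| : ℝ) • u - w‖ = |(|s|) - ‖w‖| := by
      conv_lhs => rw [hw, ← sub_smul]
      rw [norm_smul, Real.norm_eq_abs, hu1, mul_one]
    refine key.trans ?_
    rw [h1, h2]
    have h3 : |(|s|) - ‖w‖| ≤ |s - ‖w‖| := by
      have := abs_abs_sub_abs_le_abs_sub s ‖w‖
      rwa [abs_norm] at this
    have h4 : ((|s|) - ‖w‖) ^ 2 ≤ (s - ‖w‖) ^ 2 := by
      rw [← sq_abs ((|s|) - ‖w‖), ← sq_abs (s - ‖w‖)]
      exact pow_le_pow_left₀ (abs_nonneg _) h3 2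
    have h5 := mul_le_mul_of_nonneg_left h4 hcn
    simp only [Real.norm_eq_abs, sq_abs]
    linarith
  · apply le_ciInf
    intro v
    have key := env_le α hα (fun s : ℝ => |s|) (fun s => abs_nonneg s) ‖w‖ ‖v‖
    refine key.trans ?_
    have h3 : |‖v‖ - ‖w‖| ≤ ‖v - w‖ := abs_norm_sub_norm_le v w
    have h4 : (‖v‖ - ‖w‖) ^ 2 ≤ ‖v - w‖ ^ 2 := by
      calc (‖v‖ - ‖w‖) ^ 2 = |‖v‖ - ‖w‖| ^ 2 := (sq_abs _).symm
        _ ≤ ‖v - w‖ ^ 2 := pow_le_pow_left₀ (abs_nonneg _) h3 2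
    have h5 := mul_le_mul_of_nonneg_left h4 hcn
    simp only [Real.norm_eq_abs, sq_abs, abs_of_nonneg (norm_nonneg v)] at key ⊢
    linarith

theorem stmt_13 {d : ℕ} (α β : ℝ) (hα : 0 < α) (hβ : 0 < β)
    (x : EuclideanSpace ℝ (Fin d)) (hx : x ≠ 0) :
    proxSet β (fun w : EuclideanSpace ℝ (Fin d) =>
        ‖w‖ - moreauEnv α (fun v : EuclideanSpace ℝ (Fin d) => ‖v‖) w) x =
      (fun t : ℝ => (t / ‖x‖) • x) ''
        proxSet β (fun t : ℝ => |t| - moreauEnv α (fun s : ℝ => |s|) t) ‖x‖ := by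
  have hr : (0:ℝ) < ‖x‖ := norm_pos_iff.2 hx
  set r := ‖x‖ with hrdef
  set c := 1 / (2 * β) with hc
  have hcpos : 0 < c := by rw [hc]; positivity
  set H : ℝ → ℝ := fun t => |t| - moreauEnv α (fun s : ℝ => |s|) t with hH
  have he : ‖(r⁻¹ • x : EuclideanSpace ℝ (Fin d))‖ = 1 := by
    rw [norm_smul, norm_inv, Real.norm_eq_abs, abs_of_pos hr, inv_mul_cancel₀ hr.ne']
  have hg : ∀ w : EuclideanSpace ℝ (Fin d),
      ‖w‖ - moreauEnv α (fun v : EuclideanSpace ℝ (Fin d) => ‖v‖) w = H ‖w‖ := by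
    intro w
    rw [env_norm_eq α hα (r⁻¹ • x) he w, hH]
    simp [abs_of_nonneg (norm_nonneg w)]
  have Heven : ∀ t : ℝ, H |t| = H t := by
    intro t
    simp only [hH, abs_abs, env_abs_even α hα t]
  have hnorm_smul : ∀ t : ℝ, ‖((t / r) • x : EuclideanSpace ℝ (Fin d))‖ = |t| := by
    intro t
    rw [norm_smul, Real.norm_eq_abs, abs_div, abs_of_pos hr, div_mul_cancel₀ _ hr.ne']
  have hsub : ∀ t : ℝ, ‖((t / r) • x : EuclideanSpace ℝ (Fin d)) - x‖ = |t - r| := by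
    intro t
    have : ((t / r) • x : EuclideanSpace ℝ (Fin d)) - x = ((t - r) / r) • x := by
      rw [sub_div, div_self hr.ne', sub_smul, one_smul]
    rw [this, norm_smul, Real.norm_eq_abs, abs_div, abs_of_pos hr, div_mul_cancel₀ _ hr.ne']
  ext w
  simp only [proxSet, Set.mem_setOf_eq, Set.mem_image, Real.norm_eq_abs, sq_abs]
  constructor
  · intro hw
    -- compare with the radial projection
    have h0 := hw ((‖w‖ / r) • x)
    rw [hg w, hg ((‖w‖ / r) • x)] at h0
    simp only [hnorm_smul, hsub, abs_of_nonneg (norm_nonneg w)] at h0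
    have hle : ‖w - x‖ ^ 2 ≤ (‖w‖ - r) ^ 2 := by
      have h' : c * ‖w - x‖ ^ 2 ≤ c * |‖w‖ - r| ^ 2 := by linarith
      have := le_of_mul_le_mul_left (by linarith : c * ‖w - x‖ ^ 2 ≤ c * (|‖w‖ - r|) ^ 2) hcpos
      calc ‖w - x‖ ^ 2 ≤ |‖w‖ - r| ^ 2 := this
        _ = (‖w‖ - r) ^ 2 := sq_abs _
    have hge : (‖w‖ - r) ^ 2 ≤ ‖w - x‖ ^ 2 := by
      calc (‖w‖ - r) ^ 2 = |‖w‖ - r| ^ 2 := (sq_abs _).symm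
        _ ≤ ‖w - x‖ ^ 2 := pow_le_pow_left₀ (abs_nonneg _) (abs_norm_sub_norm_le w x) 2
    have heq : ‖w - x‖ ^ 2 = (‖w‖ - r) ^ 2 := le_antisymm hle hge
    -- deduce alignment
    have hinner : (inner ℝ w x : ℝ) = ‖w‖ * ‖x‖ := by
      have hexp := norm_sub_sq_real w x
      rw [heq, ← hrdef] at hexp
      nlinarith [hexp]
    have halign : ‖x‖ • w = ‖w‖ • x := inner_eq_norm_mul_iff_real.1 hinner
    have hwx : w = (‖w‖ / r) • x := by
      rw [div_eq_inv_mul, mul_smul, ← halign, smul_smul, ← hrdef,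
        inv_mul_cancel₀ hr.ne', one_smul]
    refine ⟨‖w‖, ?_, hwx.symm⟩
    intro s
    have hs := hw ((s / r) • x)
    rw [hg w, hg ((s / r) • x)] at hs
    simp only [hnorm_smul, hsub, Heven, sq_abs] at hs
    calc H ‖w‖ + 1 / (2 * β) * (‖w‖ - r) ^ 2
          = H ‖w‖ + 1 / (2 * β) * ‖w - x‖ ^ 2 := by rw [heq]
      _ ≤ H s + 1 / (2 * β) * (s - r) ^ 2 := hs
  · rintro ⟨t, ht, rfl⟩
    intro u
    have h1 := ht ‖u‖
    rw [hg ((t / r) • x), hg u]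
    simp only [hnorm_smul, hsub, Heven, sq_abs]
    have h4 : (‖u‖ - r) ^ 2 ≤ ‖u - x‖ ^ 2 := by
      calc (‖u‖ - r) ^ 2 = |‖u‖ - r| ^ 2 := (sq_abs _).symm
        _ ≤ ‖u - x‖ ^ 2 := pow_le_pow_left₀ (abs_nonneg _) (abs_norm_sub_norm_le u x) 2
    have h5 : 1 / (2 * β) * (‖u‖ - r) ^ 2 ≤ 1 / (2 * β) * ‖u - x‖ ^ 2 :=
      mul_le_mul_of_nonneg_left h4 hcpos.le
    calc H t + 1 / (2 * β) * (t - r) ^ 2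
          ≤ H ‖u‖ + 1 / (2 * β) * (‖u‖ - r) ^ 2 := h1
      _ ≤ H ‖u‖ + 1 / (2 * β) * ‖u - x‖ ^ 2 := by linarith
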